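/- arXiv:1706.07386 — 4 statements merged into one kernel-verified Lean document; each statement's English description precedes it below -/
import Mathlib

section
/- Let ({\cal A}, I) be a weak ditalgebra ${\cal A} = (T_A(V), δ)$ with an ideal I of A such that either ${\cal A}$ is interlaced with I or δ(I) ⊆ IV + VI. Set I_V = IV + δ(I) + VI, an A-A-subbimodule of V. Then the ideal J of T generated by I and I_V satisfies δ(J) ⊆ J (so J is an ideal of the weak ditalgebra). In particular, J ∩ A = I and J ∩ V = I_V, and if δ(I) ⊆ IV + VI then I_V = IV + VI. -/
/- Model: `T` is an (internally) graded `k`-algebra with grading `𝒜`, where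
`A = 𝒜 0` is the degree-0 part and `V = 𝒜 1` the degree-1 part of a graded tensor
algebra `T = T_A(V)` (so `𝒜 (i+1) = 𝒜 i * 𝒜 1`), and `δ` is a differential
(degree `+1`, graded Leibniz rule).  `I ⊆ A` is an ideal of `A`. -/

/-- Let `(𝒜, I)` be a weak ditalgebra with an ideal `I` of `A` such
that either `𝒜` is interlaced with `I`, or `δ(I) ⊆ IV + VI`.  Put
`I_V = IV + δ(I) + VI ⊆ V`.  Then the ideal `J` of `T` generated by `I` and `I_V`
satisfies `δ(J) ⊆ J`; in particular `J ∩ A = I`, `J ∩ V = I_V`, and if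
`δ(I) ⊆ IV + VI` then `I_V = IV + VI`. -/
theorem ideal_generated_is_delta_stable {k T : Type*} [Field k] [Ring T]
    [Algebra k T]
    (𝒜 : ℕ → Submodule k T) (hone : (1 : T) ∈ 𝒜 0)
    (hmul : ∀ i j : ℕ, 𝒜 i * 𝒜 j ≤ 𝒜 (i + j))
    (hgen : ∀ i : ℕ, 𝒜 (i + 1) = 𝒜 i * 𝒜 1)
    (hInternal : DirectSum.IsInternal 𝒜)
    (δ : T →ₗ[k] T)
    (hdeg : ∀ i : ℕ, ∀ x ∈ 𝒜 i, δ x ∈ 𝒜 (i + 1))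
    (hLeib : ∀ i j : ℕ, ∀ a ∈ 𝒜 i, ∀ b ∈ 𝒜 j,
      δ (a * b) = δ a * b + ((-1 : k) ^ i) • (a * δ b))
    (I : Submodule k T) (hI0 : I ≤ 𝒜 0)
    (hIl : 𝒜 0 * I ≤ I) (hIr : I * 𝒜 0 ≤ I)
    (hcase :
      ((∀ a ∈ 𝒜 0, δ (δ a) ∈
          I * (𝒜 1 * 𝒜 1) + 𝒜 1 * I * 𝒜 1 + (𝒜 1 * 𝒜 1) * I) ∧
        (∀ v ∈ 𝒜 1, δ (δ v) ∈
          I * (𝒜 1 * 𝒜 1 * 𝒜 1) + 𝒜 1 * I * (𝒜 1 * 𝒜 1) +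
            (𝒜 1 * 𝒜 1) * I * 𝒜 1 + (𝒜 1 * 𝒜 1 * 𝒜 1) * I)) ∨
      Submodule.map δ I ≤ I * 𝒜 1 + 𝒜 1 * I) :
    (let IV : Submodule k T := I * 𝒜 1 + Submodule.map δ I + 𝒜 1 * I
     let J : Submodule k T := ⊤ * (I + IV) * ⊤
     Submodule.map δ J ≤ J ∧ J ⊓ 𝒜 0 = I ∧ J ⊓ 𝒜 1 = IV ∧
       (Submodule.map δ I ≤ I * 𝒜 1 + 𝒜 1 * I → IV = I * 𝒜 1 + 𝒜 1 * I)) := by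
  intro IV J
  haveI : DirectSum.Decomposition 𝒜 := hInternal.chooseDecomposition
  have hA_le : I * 𝒜 1 ≤ IV := le_sup_of_le_left le_sup_left
  have hB_le : Submodule.map δ I ≤ IV := le_sup_of_le_left le_sup_right
  have hC_le : 𝒜 1 * I ≤ IV := le_sup_right
  have hIV1 : IV ≤ 𝒜 1 := by
    refine sup_le (sup_le ?_ ?_) ?_
    · exact (mul_le_mul' hI0 le_rfl).trans (hmul 0 1)
    · exact Submodule.map_le_iff_le_comap.mpr (fun x hx => hdeg 0 x (hI0 hx))
    · exact (mul_le_mul' le_rfl hI0).trans (hmul 1 0)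
  have hsubJ : ∀ x ∈ I + IV, x ∈ J := by
    intro x hx
    have h := Submodule.mul_mem_mul
      (Submodule.mul_mem_mul (Submodule.mem_top (x := (1 : T))) hx)
      (Submodule.mem_top (x := (1 : T)))
    rw [mul_one, one_mul] at h
    exact h
  have hIJ : I ≤ J := fun x hx => hsubJ x (Submodule.mem_sup_left hx)
  have hIVJ : IV ≤ J := fun x hx => hsubJ x (Submodule.mem_sup_right hx)
  have hJl : ∀ (t z : T), z ∈ J → t * z ∈ J := by
    intro t z hz
    refine Submodule.mul_induction_on hz (fun a ha s _ => ?_)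
      (fun u v hu hv => by rw [mul_add]; exact add_mem hu hv)
    refine Submodule.mul_induction_on ha (fun u _ x hx => ?_)
      (fun p q hp hq => by rw [add_mul, mul_add]; exact add_mem hp hq)
    have e : t * ((u * x) * s) = ((t * u) * x) * s := by simp only [mul_assoc]
    rw [e]
    exact Submodule.mul_mem_mul (Submodule.mul_mem_mul Submodule.mem_top hx) Submodule.mem_top
  have hJr : ∀ z ∈ J, ∀ t : T, z * t ∈ J := by
    intro z hz t
    refine Submodule.mul_induction_on hz (fun a ha s _ => ?_)
      (fun u v hu hv => by rw [add_mul]; exact add_mem hu hv)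
    rw [mul_assoc]
    exact Submodule.mul_mem_mul ha (Submodule.mem_top (x := s * t))
  -- IV is an A-A-subbimodule
  have hIVl : ∀ a ∈ 𝒜 0, ∀ y ∈ IV, a * y ∈ IV := by
    intro a ha y hy'
    have hy : y ∈ I * 𝒜 1 + Submodule.map δ I + 𝒜 1 * I := hy'
    rw [Submodule.add_eq_sup, Submodule.mem_sup] at hy
    obtain ⟨y1, hy1, y2, hy2, rfl⟩ := hy
    rw [Submodule.add_eq_sup, Submodule.mem_sup] at hy1
    obtain ⟨p, hp, q, hq, rfl⟩ := hy1
    rw [mul_add, mul_add]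
    refine add_mem (add_mem ?_ ?_) ?_
    · refine hA_le ?_
      refine Submodule.mul_induction_on hp (fun u hu v hv => ?_)
        (fun m m' hm hm' => by rw [mul_add]; exact add_mem hm hm')
      rw [← mul_assoc]
      exact Submodule.mul_mem_mul (hIl (Submodule.mul_mem_mul ha hu)) hv
    · obtain ⟨x, hx, rfl⟩ := hq
      have e := hLeib 0 0 a ha x (hI0 hx)
      rw [pow_zero, one_smul] at e
      have e' : a * δ x = δ (a * x) - δ a * x := by rw [e]; abel
      rw [e']
      exact sub_mem (hB_le (Submodule.mem_map_of_mem (hIl (Submodule.mul_mem_mul ha hx))))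
        (hC_le (Submodule.mul_mem_mul (hdeg 0 a ha) hx))
    · refine hC_le ?_
      refine Submodule.mul_induction_on hy2 (fun v hv u hu => ?_)
        (fun m m' hm hm' => by rw [mul_add]; exact add_mem hm hm')
      rw [← mul_assoc]
      exact Submodule.mul_mem_mul (hmul 0 1 (Submodule.mul_mem_mul ha hv)) hu
  have hIVr : ∀ y ∈ IV, ∀ b ∈ 𝒜 0, y * b ∈ IV := by
    intro y hy' b hb
    have hy : y ∈ I * 𝒜 1 + Submodule.map δ I + 𝒜 1 * I := hy'
    rw [Submodule.add_eq_sup, Submodule.mem_sup] at hy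
    obtain ⟨y1, hy1, y2, hy2, rfl⟩ := hy
    rw [Submodule.add_eq_sup, Submodule.mem_sup] at hy1
    obtain ⟨p, hp, q, hq, rfl⟩ := hy1
    rw [add_mul, add_mul]
    refine add_mem (add_mem ?_ ?_) ?_
    · refine hA_le ?_
      refine Submodule.mul_induction_on hp (fun u hu v hv => ?_)
        (fun m m' hm hm' => by rw [add_mul]; exact add_mem hm hm')
      rw [mul_assoc]
      exact Submodule.mul_mem_mul hu (hmul 1 0 (Submodule.mul_mem_mul hv hb))
    · obtain ⟨x, hx, rfl⟩ := hq
      have e := hLeib 0 0 x (hI0 hx) b hb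
      rw [pow_zero, one_smul] at e
      have e' : δ x * b = δ (x * b) - x * δ b := by rw [e]; abel
      rw [e']
      exact sub_mem (hB_le (Submodule.mem_map_of_mem (hIr (Submodule.mul_mem_mul hx hb))))
        (hA_le (Submodule.mul_mem_mul hx (hdeg 0 b hb)))
    · refine hC_le ?_
      refine Submodule.mul_induction_on hy2 (fun v hv u hu => ?_)
        (fun m m' hm hm' => by rw [add_mul]; exact add_mem hm hm')
      rw [mul_assoc]
      exact Submodule.mul_mem_mul hv (hIr (Submodule.mul_mem_mul hu hb))
  -- projections of J
  have hhom : ∀ (d n : ℕ) (x : T), x ∈ 𝒜 d → ∀ (Mn : Submodule k T),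
      (∀ i j : ℕ, ∀ t ∈ 𝒜 i, ∀ s ∈ 𝒜 j, i + d + j = n → t * x * s ∈ Mn) →
      ∀ t s : T, ((DirectSum.decompose 𝒜 (t * x * s) n : T)) ∈ Mn := by
    intro d n x hx Mn hcond t
    refine DirectSum.Decomposition.inductionOn 𝒜
      (motive := fun t => ∀ s : T, ((DirectSum.decompose 𝒜 (t * x * s) n : T)) ∈ Mn) ?_ ?_ ?_ t
    · intro s; simp
    · intro i m s
      refine DirectSum.Decomposition.inductionOn 𝒜
        (motive := fun s => ((DirectSum.decompose 𝒜 ((m : T) * x * s) n : T)) ∈ Mn) ?_ ?_ ?_ s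
      · simp
      · intro j w
        have hmem : (m : T) * x * (w : T) ∈ 𝒜 (i + d + j) :=
          hmul _ _ (Submodule.mul_mem_mul (hmul _ _ (Submodule.mul_mem_mul m.2 hx)) w.2)
        by_cases hn : i + d + j = n
        · rw [DirectSum.decompose_of_mem_same 𝒜 (hn ▸ hmem)]
          exact hcond i j _ m.2 _ w.2 hn
        · rw [DirectSum.decompose_of_mem_ne 𝒜 hmem hn]
          exact zero_mem _
      · intro u v hu hv
        rw [mul_add, DirectSum.decompose_add, DirectSum.add_apply, Submodule.coe_add]
        exact add_mem hu hv
    · intro u v hu hv s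
      rw [add_mul, add_mul, DirectSum.decompose_add, DirectSum.add_apply, Submodule.coe_add]
      exact add_mem (hu s) (hv s)
  have hπ : ∀ (n : ℕ) (Mn : Submodule k T),
      (∀ i j : ℕ, ∀ t ∈ 𝒜 i, ∀ s ∈ 𝒜 j, ∀ x ∈ I, i + j = n → t * x * s ∈ Mn) →
      (∀ i j : ℕ, ∀ t ∈ 𝒜 i, ∀ s ∈ 𝒜 j, ∀ x ∈ IV, i + 1 + j = n → t * x * s ∈ Mn) →
      ∀ z ∈ J, ((DirectSum.decompose 𝒜 z n : T)) ∈ Mn := by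
    intro n Mn h0 h1 z hz
    refine Submodule.mul_induction_on hz (fun a ha s _ => ?_) (fun u v hu hv => ?_)
    · refine Submodule.mul_induction_on ha (fun t _ x hx => ?_) (fun p q hp hq => ?_)
      · rw [Submodule.add_eq_sup, Submodule.mem_sup] at hx
        obtain ⟨x0, hx0, x1, hx1, rfl⟩ := hx
        rw [mul_add, add_mul, DirectSum.decompose_add, DirectSum.add_apply, Submodule.coe_add]
        refine add_mem
          (hhom 0 n x0 (hI0 hx0) Mn (fun i j t' ht' s' hs' hij =>
            h0 i j t' ht' s' hs' x0 hx0 (by omega)) t s)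
          (hhom 1 n x1 (hIV1 hx1) Mn (fun i j t' ht' s' hs' hij =>
            h1 i j t' ht' s' hs' x1 hx1 hij) t s)
      · rw [add_mul, DirectSum.decompose_add, DirectSum.add_apply, Submodule.coe_add]
        exact add_mem hp hq
    · rw [DirectSum.decompose_add, DirectSum.add_apply, Submodule.coe_add]
      exact add_mem hu hv
  -- extended Leibniz rule
  have hLeib' : ∀ (i : ℕ), ∀ a ∈ 𝒜 i, ∀ b : T,
      δ (a * b) = δ a * b + ((-1 : k) ^ i) • (a * δ b) := by
    intro i a ha b
    refine DirectSum.Decomposition.inductionOn 𝒜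
      (motive := fun b => δ (a * b) = δ a * b + ((-1 : k) ^ i) • (a * δ b)) ?_ ?_ ?_ b
    · simp
    · intro j w; exact hLeib i j a ha (w : T) w.2
    · intro u v hu hv
      simp only [mul_add, map_add, smul_add, hu, hv]
      abel
  -- δ of generators lands in J
  have hA' : ∀ w ∈ I * 𝒜 1, δ w ∈ J := by
    intro w hw
    refine Submodule.mul_induction_on hw (fun x hx v hv => ?_)
      (fun m m' hm hm' => by rw [map_add]; exact add_mem hm hm')
    rw [hLeib 0 1 x (hI0 hx) v hv]
    exact add_mem (hJr _ (hIVJ (hB_le (Submodule.mem_map_of_mem hx))) v)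
      (Submodule.smul_mem _ _ (hJr _ (hIJ hx) (δ v)))
  have hB' : ∀ w ∈ 𝒜 1 * I, δ w ∈ J := by
    intro w hw
    refine Submodule.mul_induction_on hw (fun v hv x hx => ?_)
      (fun m m' hm hm' => by rw [map_add]; exact add_mem hm hm')
    rw [hLeib 1 0 v hv x (hI0 hx)]
    exact add_mem (hJl _ _ (hIJ hx))
      (Submodule.smul_mem _ _ (hJl _ _ (hIVJ (hB_le (Submodule.mem_map_of_mem hx)))))
  have hδIV : ∀ y ∈ IV, δ y ∈ J := by
    intro y hy'
    have hy : y ∈ I * 𝒜 1 + Submodule.map δ I + 𝒜 1 * I := hy'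
    rw [Submodule.add_eq_sup, Submodule.mem_sup] at hy
    obtain ⟨y1, hy1, y2, hy2, rfl⟩ := hy
    rw [Submodule.add_eq_sup, Submodule.mem_sup] at hy1
    obtain ⟨p, hp, q, hq, rfl⟩ := hy1
    rw [map_add, map_add]
    refine add_mem (add_mem (hA' p hp) ?_) (hB' y2 hy2)
    obtain ⟨x, hx, rfl⟩ := hq
    rcases hcase with ⟨h1, _⟩ | h2
    · have hle : I * (𝒜 1 * 𝒜 1) + 𝒜 1 * I * 𝒜 1 + (𝒜 1 * 𝒜 1) * I ≤ J := by
        refine sup_le (sup_le ?_ ?_) ?_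
        · rw [Submodule.mul_le]; intro a haI b hb; exact hJr a (hIJ haI) b
        · rw [Submodule.mul_le]; intro a haI b hb; exact hJr a (hIVJ (hC_le haI)) b
        · rw [Submodule.mul_le]; intro a haI b hb; exact hJl a b (hIJ hb)
      exact hle (h1 x (hI0 hx))
    · have hmem := h2 (Submodule.mem_map_of_mem hx)
      rw [Submodule.add_eq_sup, Submodule.mem_sup] at hmem
      obtain ⟨w1, hw1, w2, hw2, hw⟩ := hmem
      rw [← hw, map_add]
      exact add_mem (hA' w1 hw1) (hB' w2 hw2)
  have hM : ∀ u, u ∈ J → δ u ∈ J → ∀ t : T, δ (t * u) ∈ J := by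
    intro u hu hdu t
    refine DirectSum.Decomposition.inductionOn 𝒜 (motive := fun t => δ (t * u) ∈ J) ?_ ?_ ?_ t
    · simp
    · intro i m
      rw [hLeib' i (m : T) m.2 u]
      exact add_mem (hJl _ _ hu) (Submodule.smul_mem _ _ (hJl _ _ hdu))
    · intro p q hp hq
      rw [add_mul, map_add]
      exact add_mem hp hq
  refine ⟨?_, ?_, ?_, ?_⟩
  · -- δ(J) ⊆ J
    intro y hy
    obtain ⟨z, hz, rfl⟩ := hy
    refine Submodule.mul_induction_on hz (fun a ha s _ => ?_)
      (fun u v hu hv => by rw [map_add]; exact add_mem hu hv)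
    refine Submodule.mul_induction_on ha (fun t _ x hx => ?_)
      (fun p q hp hq => by rw [add_mul, map_add]; exact add_mem hp hq)
    rw [mul_assoc]
    refine hM (x * s) (hJr x (hsubJ x hx) s) ?_ t
    rw [Submodule.add_eq_sup, Submodule.mem_sup] at hx
    obtain ⟨x0, hx0, x1, hx1, rfl⟩ := hx
    rw [add_mul, map_add]
    refine add_mem ?_ ?_
    · rw [hLeib' 0 x0 (hI0 hx0) s]
      exact add_mem (hJr _ (hIVJ (hB_le (Submodule.mem_map_of_mem hx0))) s)
        (Submodule.smul_mem _ _ (hJr _ (hIJ hx0) (δ s)))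
    · rw [hLeib' 1 x1 (hIV1 hx1) s]
      exact add_mem (hJr _ (hδIV x1 hx1) s)
        (Submodule.smul_mem _ _ (hJr _ (hIVJ hx1) (δ s)))
  · -- J ⊓ 𝒜 0 = I
    refine le_antisymm ?_ (le_inf hIJ hI0)
    intro x hx
    rw [Submodule.mem_inf] at hx
    obtain ⟨hxJ, hx0⟩ := hx
    have h := hπ 0 I ?_ ?_ x hxJ
    · rwa [DirectSum.decompose_of_mem_same 𝒜 hx0] at h
    · intro i j t ht s hs x' hx' hij
      obtain ⟨rfl, rfl⟩ : i = 0 ∧ j = 0 := by omega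
      exact hIr (Submodule.mul_mem_mul (hIl (Submodule.mul_mem_mul ht hx')) hs)
    · intro i j t ht s hs x' hx' hij
      exact absurd hij (by omega)
  · -- J ⊓ 𝒜 1 = IV
    refine le_antisymm ?_ (le_inf hIVJ hIV1)
    intro x hx
    rw [Submodule.mem_inf] at hx
    obtain ⟨hxJ, hx1⟩ := hx
    have h := hπ 1 IV ?_ ?_ x hxJ
    · rwa [DirectSum.decompose_of_mem_same 𝒜 hx1] at h
    · intro i j t ht s hs x' hx' hij
      rcases i with _ | i
      · have hj : j = 1 := by omega
        subst hj
        exact hA_le (Submodule.mul_mem_mul (hIl (Submodule.mul_mem_mul ht hx')) hs)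
      · obtain ⟨rfl, rfl⟩ : i = 0 ∧ j = 0 := by omega
        rw [mul_assoc]
        exact hC_le (Submodule.mul_mem_mul ht (hIr (Submodule.mul_mem_mul hx' hs)))
    · intro i j t ht s hs x' hx' hij
      obtain ⟨rfl, rfl⟩ : i = 0 ∧ j = 0 := by omega
      exact hIVr _ (hIVl t ht x' hx') s hs
  · intro h
    show I * 𝒜 1 + Submodule.map δ I + 𝒜 1 * I = I * 𝒜 1 + 𝒜 1 * I
    exact le_antisymm (sup_le (sup_le le_sup_left h) le_sup_right)
      (sup_le (le_sup_of_le_left le_sup_left) le_sup_right)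
end

section
/- Let ${\cal A} = (T_A(V), δ)$ be a weak ditalgebra, I an ${\cal A}$-balanced ideal of A (δ(I) ⊆ IV + VI), and J the ideal of ${\cal A}$ generated by I. Then the following are equivalent: (1) ${\cal A}$ is interlaced with I; (2) δ²(A) ⊆ J and δ²(V) ⊆ J; (3) δ²(T) ⊆ J. -/
section Helpers

variable {k T : Type*} [Field k] [Ring T] [Algebra k T]

theorem submod_sum_le {ι : Type*} {s : Finset ι} {f : ι → Submodule k T} {Q : Submodule k T}
    (h : ∀ i ∈ s, f i ≤ Q) : (∑ i ∈ s, f i) ≤ Q := by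
  classical
  induction s using Finset.induction with
  | empty => simp
  | @insert a s ha ih =>
      rw [Finset.sum_insert ha, Submodule.add_eq_sup, sup_le_iff]
      exact ⟨h a (Finset.mem_insert_self a s), ih fun i hi => h i (Finset.mem_insert_of_mem hi)⟩

theorem submod_le_sum {ι : Type*} {s : Finset ι} {f : ι → Submodule k T} {i : ι} (hi : i ∈ s) :
    f i ≤ ∑ j ∈ s, f j := by
  classical
  rw [← Finset.add_sum_erase s f hi, Submodule.add_eq_sup]
  exact le_sup_left

theorem submod_add_le_add {a b c d : Submodule k T} (h1 : a ≤ c) (h2 : b ≤ d) :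
    a + b ≤ c + d := by
  rw [Submodule.add_eq_sup, Submodule.add_eq_sup]
  exact sup_le_sup h1 h2

theorem submod_add_le {a b c : Submodule k T} (h1 : a ≤ c) (h2 : b ≤ c) : a + b ≤ c := by
  rw [Submodule.add_eq_sup]
  exact sup_le h1 h2

end Helpers

/- Model: `T` is an internally graded `k`-algebra with grading `𝒜`,
`A = 𝒜 0`, `V = 𝒜 1`, graded tensor-algebra structure `𝒜 (i+1) = 𝒜 i * 𝒜 1`,
and `δ` a differential.  `I ⊆ A` is an `𝒜`-balanced ideal of `A`
(`δ(I) ⊆ IV + VI`) and `J` is the ideal of `𝒜` generated by `I`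
(generated by `I` and `IV + δ(I) + VI`). -/

set_option maxHeartbeats 1600000 in
/-- For an `𝒜`-balanced ideal `I` with generated ideal `J`, the
following are equivalent: (1) `𝒜` is interlaced with `I`;
(2) `δ²(A) ⊆ J` and `δ²(V) ⊆ J`; (3) `δ²(T) ⊆ J`. -/
theorem balanced_interlaced_tfae {k T : Type*} [Field k] [Ring T] [Algebra k T]
    (𝒜 : ℕ → Submodule k T) (hone : (1 : T) ∈ 𝒜 0)
    (hmul : ∀ i j : ℕ, 𝒜 i * 𝒜 j ≤ 𝒜 (i + j))
    (hgen : ∀ i : ℕ, 𝒜 (i + 1) = 𝒜 i * 𝒜 1)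
    (hInternal : DirectSum.IsInternal 𝒜)
    (δ : T →ₗ[k] T)
    (hdeg : ∀ i : ℕ, ∀ x ∈ 𝒜 i, δ x ∈ 𝒜 (i + 1))
    (hLeib : ∀ i j : ℕ, ∀ a ∈ 𝒜 i, ∀ b ∈ 𝒜 j,
      δ (a * b) = δ a * b + ((-1 : k) ^ i) • (a * δ b))
    (I : Submodule k T) (hI0 : I ≤ 𝒜 0)
    (hIl : 𝒜 0 * I ≤ I) (hIr : I * 𝒜 0 ≤ I)
    (hbal : Submodule.map δ I ≤ I * 𝒜 1 + 𝒜 1 * I) :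
    (let J : Submodule k T :=
      ⊤ * (I + (I * 𝒜 1 + Submodule.map δ I + 𝒜 1 * I)) * ⊤
     -- (1) ↔ (2)
     (((∀ a ∈ 𝒜 0, δ (δ a) ∈
          I * (𝒜 1 * 𝒜 1) + 𝒜 1 * I * 𝒜 1 + (𝒜 1 * 𝒜 1) * I) ∧
        (∀ v ∈ 𝒜 1, δ (δ v) ∈
          I * (𝒜 1 * 𝒜 1 * 𝒜 1) + 𝒜 1 * I * (𝒜 1 * 𝒜 1) +
            (𝒜 1 * 𝒜 1) * I * 𝒜 1 + (𝒜 1 * 𝒜 1 * 𝒜 1) * I)) ↔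
       ((∀ a ∈ 𝒜 0, δ (δ a) ∈ J) ∧ (∀ v ∈ 𝒜 1, δ (δ v) ∈ J))) ∧
     -- (2) ↔ (3)
     (((∀ a ∈ 𝒜 0, δ (δ a) ∈ J) ∧ (∀ v ∈ 𝒜 1, δ (δ v) ∈ J)) ↔
       (∀ t : T, δ (δ t) ∈ J))) := by
  intro J
  set G : Submodule k T := I + (I * 𝒜 1 + Submodule.map δ I + 𝒜 1 * I) with hGdef
  have hJ : J = ⊤ * G * ⊤ := rfl
  have hIG : I ≤ G := by rw [hGdef, Submodule.add_eq_sup]; exact le_sup_left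
  -- X * I * Y ≤ J for any X, Y
  have hXIY : ∀ X Y : Submodule k T, X * I * Y ≤ J := by
    intro X Y
    rw [hJ]
    exact mul_le_mul' (mul_le_mul' le_top hIG) le_top
  -- J is a two-sided ideal
  have hJr : J * ⊤ ≤ J := by
    rw [hJ, mul_assoc (⊤ * G) ⊤ ⊤]
    exact mul_le_mul' le_rfl le_top
  have hJl : ⊤ * J ≤ J := by
    rw [hJ, ← mul_assoc ⊤ (⊤ * G) ⊤, ← mul_assoc ⊤ ⊤ G]
    exact mul_le_mul' (mul_le_mul' le_top le_rfl) le_rfl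
  -- powers of 𝒜 1
  have hpow : ∀ p : ℕ, (𝒜 1) ^ p ≤ 𝒜 p := by
    intro p
    induction p with
    | zero => simpa [pow_zero] using Submodule.one_le.mpr hone
    | succ n ih =>
        rw [pow_succ]
        exact (mul_le_mul' ih le_rfl).trans (hmul n 1)
  have h𝒜eq : ∀ n : ℕ, 𝒜 n = 𝒜 0 * (𝒜 1) ^ n := by
    intro n
    induction n with
    | zero => rw [pow_zero, mul_one]
    | succ n ih => rw [hgen n, ih, pow_succ, mul_assoc]
  -- the homogeneous layers of the ideal J
  set S : ℕ → Submodule k T :=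
    fun n => ∑ p ∈ Finset.range (n + 1), (𝒜 1) ^ p * I * (𝒜 1) ^ (n - p) with hSdef
  have hSA : ∀ n, S n ≤ 𝒜 n := by
    intro n
    refine submod_sum_le ?_
    intro p hp
    rw [Finset.mem_range, Nat.lt_succ_iff] at hp
    calc (𝒜 1) ^ p * I * (𝒜 1) ^ (n - p) ≤ 𝒜 p * 𝒜 0 * 𝒜 (n - p) :=
          mul_le_mul' (mul_le_mul' (hpow p) hI0) (hpow _)
      _ ≤ 𝒜 (p + 0) * 𝒜 (n - p) := mul_le_mul' (hmul p 0) le_rfl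
      _ ≤ 𝒜 (p + 0 + (n - p)) := hmul _ _
      _ = 𝒜 n := by congr 1; omega
  have hterm : ∀ a b : ℕ, (𝒜 1) ^ a * I * (𝒜 1) ^ b ≤ S (a + b) := by
    intro a b
    have ha : a ∈ Finset.range (a + b + 1) := Finset.mem_range.mpr (by omega)
    have := submod_le_sum (f := fun p => (𝒜 1) ^ p * I * (𝒜 1) ^ (a + b - p)) ha
    simpa [Nat.add_sub_cancel_left] using this
  -- absorption of 𝒜 0 by each layer term
  have hA0l : ∀ p q : ℕ, 𝒜 0 * ((𝒜 1) ^ p * I * (𝒜 1) ^ q) ≤ (𝒜 1) ^ p * I * (𝒜 1) ^ q := by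
    intro p q
    have key : 𝒜 0 * ((𝒜 1) ^ p * I) ≤ (𝒜 1) ^ p * I := by
      cases p with
      | zero =>
          rw [pow_zero, one_mul]
          exact hIl
      | succ n =>
          calc 𝒜 0 * ((𝒜 1) ^ (n + 1) * I) = (𝒜 0 * 𝒜 1) * ((𝒜 1) ^ n * I) := by
                rw [pow_succ']; simp only [mul_assoc]
            _ ≤ 𝒜 1 * ((𝒜 1) ^ n * I) :=
                mul_le_mul' (by simpa using hmul 0 1) le_rfl
            _ = (𝒜 1) ^ (n + 1) * I := by rw [pow_succ']; simp only [mul_assoc]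
    calc 𝒜 0 * ((𝒜 1) ^ p * I * (𝒜 1) ^ q)
        = (𝒜 0 * ((𝒜 1) ^ p * I)) * (𝒜 1) ^ q := by simp only [mul_assoc]
      _ ≤ (𝒜 1) ^ p * I * (𝒜 1) ^ q := mul_le_mul' key le_rfl
  have hA0r : ∀ p q : ℕ, ((𝒜 1) ^ p * I * (𝒜 1) ^ q) * 𝒜 0 ≤ (𝒜 1) ^ p * I * (𝒜 1) ^ q := by
    intro p q
    have key : (I * (𝒜 1) ^ q) * 𝒜 0 ≤ I * (𝒜 1) ^ q := by
      cases q with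
      | zero =>
          rw [pow_zero, mul_one]
          exact hIr
      | succ n =>
          calc (I * (𝒜 1) ^ (n + 1)) * 𝒜 0 = (I * (𝒜 1) ^ n) * (𝒜 1 * 𝒜 0) := by
                rw [pow_succ]; simp only [mul_assoc]
            _ ≤ (I * (𝒜 1) ^ n) * 𝒜 1 :=
                mul_le_mul' le_rfl (by simpa using hmul 1 0)
            _ = I * (𝒜 1) ^ (n + 1) := by rw [pow_succ]; simp only [mul_assoc]
    calc ((𝒜 1) ^ p * I * (𝒜 1) ^ q) * 𝒜 0
        = (𝒜 1) ^ p * ((I * (𝒜 1) ^ q) * 𝒜 0) := by simp only [mul_assoc]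
      _ ≤ (𝒜 1) ^ p * (I * (𝒜 1) ^ q) := mul_le_mul' le_rfl key
      _ = (𝒜 1) ^ p * I * (𝒜 1) ^ q := by simp only [mul_assoc]
  -- layers absorb multiplication by homogeneous components
  have h𝒜S : ∀ m n : ℕ, 𝒜 m * S n ≤ S (m + n) := by
    intro m n
    rw [hSdef]
    simp only
    rw [Finset.mul_sum]
    refine submod_sum_le ?_
    intro p hp
    rw [Finset.mem_range, Nat.lt_succ_iff] at hp
    calc 𝒜 m * ((𝒜 1) ^ p * I * (𝒜 1) ^ (n - p))
        = 𝒜 0 * ((𝒜 1) ^ (m + p) * I * (𝒜 1) ^ (n - p)) := by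
          rw [h𝒜eq m, pow_add]; simp only [mul_assoc]
      _ ≤ (𝒜 1) ^ (m + p) * I * (𝒜 1) ^ (n - p) := hA0l _ _
      _ ≤ S (m + p + (n - p)) := hterm _ _
      _ = S (m + n) := by congr 1; omega
  have hS𝒜 : ∀ n m : ℕ, S n * 𝒜 m ≤ S (n + m) := by
    intro n m
    rw [hSdef]
    simp only
    rw [Finset.sum_mul]
    refine submod_sum_le ?_
    intro p hp
    rw [Finset.mem_range, Nat.lt_succ_iff] at hp
    calc (𝒜 1) ^ p * I * (𝒜 1) ^ (n - p) * 𝒜 m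
        = ((𝒜 1) ^ p * I * (𝒜 1) ^ (n - p) * 𝒜 0) * (𝒜 1) ^ m := by
          rw [h𝒜eq m]; simp only [mul_assoc]
      _ ≤ ((𝒜 1) ^ p * I * (𝒜 1) ^ (n - p)) * (𝒜 1) ^ m :=
          mul_le_mul' (hA0r _ _) le_rfl
      _ = (𝒜 1) ^ p * I * (𝒜 1) ^ (n - p + m) := by
          rw [pow_add]; simp only [mul_assoc]
      _ ≤ S (p + (n - p + m)) := hterm _ _
      _ = S (n + m) := by congr 1; omega
  -- S 0 and S 1 facts
  have hS0 : I ≤ S 0 := by simpa using hterm 0 0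
  have hS1l : I * 𝒜 1 ≤ S 1 := by simpa using hterm 0 1
  have hS1r : 𝒜 1 * I ≤ S 1 := by simpa using hterm 1 0
  have hGle : G ≤ S 0 + S 1 := by
    rw [hGdef]
    refine submod_add_le (hS0.trans ?_) (submod_add_le (submod_add_le ?_ ?_) ?_)
    · rw [Submodule.add_eq_sup]; exact le_sup_left
    · exact hS1l.trans (by rw [Submodule.add_eq_sup]; exact le_sup_right)
    · refine (hbal.trans (submod_add_le hS1l hS1r)).trans ?_
      rw [Submodule.add_eq_sup]; exact le_sup_right
    · exact hS1r.trans (by rw [Submodule.add_eq_sup]; exact le_sup_right)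
  have hTop : (⨆ i, 𝒜 i) = ⊤ := hInternal.submodule_iSup_eq_top
  -- J is contained in the sum of the layers
  have hJle : J ≤ ⨆ n, S n := by
    rw [hJ, ← hTop, Submodule.iSup_mul, Submodule.iSup_mul]
    refine iSup_le ?_
    intro m
    rw [Submodule.mul_iSup]
    refine iSup_le ?_
    intro j
    calc 𝒜 m * G * 𝒜 j ≤ 𝒜 m * (S 0 + S 1) * 𝒜 j :=
          mul_le_mul' (mul_le_mul' le_rfl hGle) le_rfl
      _ = (𝒜 m * S 0 + 𝒜 m * S 1) * 𝒜 j := by rw [mul_add]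
      _ = 𝒜 m * S 0 * 𝒜 j + 𝒜 m * S 1 * 𝒜 j := by rw [add_mul]
      _ ≤ S (m + 0 + j) + S (m + 1 + j) :=
          submod_add_le_add (mul_le_mul' (h𝒜S m 0) le_rfl |>.trans (hS𝒜 _ j))
            (mul_le_mul' (h𝒜S m 1) le_rfl |>.trans (hS𝒜 _ j))
      _ ≤ ⨆ n, S n := submod_add_le (le_iSup S _) (le_iSup S _)
  -- extraction of homogeneous components
  letI : DirectSum.Decomposition 𝒜 := hInternal.chooseDecomposition
  have hcomp : ∀ n : ℕ, ∀ x : T, x ∈ J → x ∈ 𝒜 n → x ∈ S n := by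
    intro n x hxJ hxn
    have hx : x ∈ ⨆ m, S m := hJle hxJ
    have hdec : (DirectSum.decompose 𝒜 x n : T) = x := DirectSum.decompose_of_mem_same 𝒜 hxn
    rw [← hdec]
    clear hdec hxn hxJ
    refine Submodule.iSup_induction S (motive := fun y => (DirectSum.decompose 𝒜 y n : T) ∈ S n)
      hx ?_ ?_ ?_
    · intro m y hy
      by_cases h : m = n
      · subst h
        rw [DirectSum.decompose_of_mem_same 𝒜 (hSA m hy)]
        exact hy
      · rw [DirectSum.decompose_of_mem_ne 𝒜 (hSA m hy) h]
        exact zero_mem _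
    · simp
    · intro a b ha hb
      rw [DirectSum.decompose_add, DirectSum.add_apply, Submodule.coe_add]
      exact add_mem ha hb
  -- the degree-2 and degree-3 layers
  have hS2 : S 2 = I * (𝒜 1 * 𝒜 1) + 𝒜 1 * I * 𝒜 1 + (𝒜 1 * 𝒜 1) * I := by
    rw [hSdef]
    show (∑ p ∈ Finset.range 3, (𝒜 1) ^ p * I * (𝒜 1) ^ (2 - p)) = _
    rw [Finset.sum_range_succ, Finset.sum_range_succ, Finset.sum_range_one]
    have p2 : (𝒜 1) ^ 2 = 𝒜 1 * 𝒜 1 := by rw [pow_succ, pow_one]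
    norm_num [p2, one_mul, mul_one]
  have hS3 : S 3 = I * (𝒜 1 * 𝒜 1 * 𝒜 1) + 𝒜 1 * I * (𝒜 1 * 𝒜 1) +
      (𝒜 1 * 𝒜 1) * I * 𝒜 1 + (𝒜 1 * 𝒜 1 * 𝒜 1) * I := by
    rw [hSdef]
    show (∑ p ∈ Finset.range 4, (𝒜 1) ^ p * I * (𝒜 1) ^ (3 - p)) = _
    rw [Finset.sum_range_succ, Finset.sum_range_succ, Finset.sum_range_succ,
      Finset.sum_range_one]
    have p2 : (𝒜 1) ^ 2 = 𝒜 1 * 𝒜 1 := by rw [pow_succ, pow_one]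
    have p3 : (𝒜 1) ^ 3 = 𝒜 1 * 𝒜 1 * 𝒜 1 := by rw [pow_succ, p2]
    norm_num [p2, p3, one_mul, mul_one]
  -- the interlacing targets are contained in J
  have hT2 : I * (𝒜 1 * 𝒜 1) + 𝒜 1 * I * 𝒜 1 + (𝒜 1 * 𝒜 1) * I ≤ J := by
    refine submod_add_le (submod_add_le ?_ (hXIY _ _)) ?_
    · have := hXIY 1 (𝒜 1 * 𝒜 1); rwa [one_mul] at this
    · have := hXIY (𝒜 1 * 𝒜 1) 1; rwa [mul_one] at this
  have hT3 : I * (𝒜 1 * 𝒜 1 * 𝒜 1) + 𝒜 1 * I * (𝒜 1 * 𝒜 1) +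
      (𝒜 1 * 𝒜 1) * I * 𝒜 1 + (𝒜 1 * 𝒜 1 * 𝒜 1) * I ≤ J := by
    refine submod_add_le (submod_add_le (submod_add_le ?_ (hXIY _ _)) (hXIY _ _)) ?_
    · have := hXIY 1 (𝒜 1 * 𝒜 1 * 𝒜 1); rwa [one_mul] at this
    · have := hXIY (𝒜 1 * 𝒜 1 * 𝒜 1) 1; rwa [mul_one] at this
  constructor
  · -- (1) ↔ (2)
    constructor
    · rintro ⟨h1, h2⟩
      exact ⟨fun a ha => hT2 (h1 a ha), fun v hv => hT3 (h2 v hv)⟩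
    · rintro ⟨h1, h2⟩
      constructor
      · intro a ha
        have hmem : δ (δ a) ∈ 𝒜 2 := hdeg 1 _ (hdeg 0 a ha)
        have := hcomp 2 _ (h1 a ha) hmem
        rwa [hS2] at this
      · intro v hv
        have hmem : δ (δ v) ∈ 𝒜 3 := hdeg 2 _ (hdeg 1 v hv)
        have := hcomp 3 _ (h2 v hv) hmem
        rwa [hS3] at this
  · -- (2) ↔ (3)
    constructor
    · rintro ⟨h1, h2⟩
      have hAll : ∀ n : ℕ, ∀ x ∈ 𝒜 n, δ (δ x) ∈ J := by
        intro n
        induction n with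
        | zero => exact h1
        | succ n ih =>
            intro x hx
            rw [hgen n] at hx
            refine Submodule.mul_induction_on (C := fun y => δ (δ y) ∈ J) hx ?_ ?_
            · intro a ha v hv
              have key : δ (δ (a * v)) = δ (δ a) * v + a * δ (δ v) := by
                rw [hLeib n 1 a ha v hv, map_add, map_smul,
                  hLeib (n + 1) 1 (δ a) (hdeg n a ha) v hv,
                  hLeib n 2 a ha (δ v) (hdeg 1 v hv)]
                have e1 : ((-1 : k) ^ (n + 1)) = -((-1 : k) ^ n) := by
                  rw [pow_succ]; ring
                have e2 : ((-1 : k) ^ n * (-1 : k) ^ n) = 1 := by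
                  rw [← pow_add]
                  exact Even.neg_one_pow ⟨n, rfl⟩
                rw [smul_add, smul_smul, e1, e2, one_smul, neg_smul]
                abel
              rw [key]
              refine add_mem ?_ ?_
              · exact hJr (Submodule.mul_mem_mul (ih a ha) Submodule.mem_top)
              · exact hJl (Submodule.mul_mem_mul Submodule.mem_top (h2 v hv))
            · intro x y hx' hy'
              rw [map_add, map_add]
              exact add_mem hx' hy'
      intro t
      have ht : t ∈ ⨆ n, 𝒜 n := by rw [hTop]; exact Submodule.mem_top
      refine Submodule.iSup_induction 𝒜 (motive := fun y => δ (δ y) ∈ J) ht hAll ?_ ?_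
      · show δ (δ (0 : T)) ∈ J
        rw [map_zero, map_zero]; exact zero_mem _
      · intro x y hx' hy'
        show δ (δ (x + y)) ∈ J
        rw [map_add, map_add]
        exact add_mem hx' hy'
    · intro h
      exact ⟨fun a _ => h a, fun v _ => h v⟩
end

section
/- Let R be a principal ideal domain and 0 = U₀ ⊆ U₁ ⊆ ⋯ ⊆ U_ℓ = U a filtration of a finitely generated R-module U. Then there exists h ∈ R, h ≠ 0, such that the localization R_h ⊗_R U is a free R_h-module and each inclusion R_h ⊗_R U_i ⊆ R_h ⊗_R U_{i+1} is a split inclusion of free R_h-modules (i.e., the filtration becomes additive: each term is a direct summand of the next). -/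
private lemma aux_noZeroSMulDivisors_of_injective {R M N : Type*} [CommRing R] [AddCommGroup M]
    [AddCommGroup N] [Module R M] [Module R N] [NoZeroSMulDivisors R N]
    (f : M →ₗ[R] N) (hf : Function.Injective f) : NoZeroSMulDivisors R M := by
  constructor
  intro c x hcx
  have hfx : c • f x = 0 := by rw [← map_smul, hcx, map_zero]
  rcases NoZeroSMulDivisors.eq_zero_or_eq_zero_of_smul_eq_zero hfx with hc | hx
  · exact Or.inl hc
  · exact Or.inr (hf (by rw [hx, map_zero]))

private theorem aux_isPrincipalIdealRing_localization {R : Type*} [CommRing R]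
    [IsPrincipalIdealRing R] (p : Submonoid R) (S : Type*) [CommRing S] [Algebra R S]
    [IsLocalization p S] : IsPrincipalIdealRing S := by
  constructor
  intro J
  obtain ⟨a, ha⟩ := (IsPrincipalIdealRing.principal (J.comap (algebraMap R S))).principal
  refine ⟨algebraMap R S a, ?_⟩
  conv_lhs => rw [← IsLocalization.map_comap p S J, Ideal.under_def, ha]
  rw [Ideal.submodule_span_eq, Ideal.map_span, Set.image_singleton]

/-- Over a Noetherian domain, the torsion of a finitely generated module is killed by a
single nonzero element. -/
private lemma aux_exists_annihilator {R : Type*} [CommRing R] [IsDomain R]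
    [IsNoetherianRing R] (M : Type*) [AddCommGroup M] [Module R M] [Module.Finite R M] :
    ∃ r : R, r ≠ 0 ∧ ∀ m : M, (∃ a : R, a ≠ 0 ∧ a • m = 0) → r • m = 0 := by
  classical
  have hT : (Submodule.torsion R M).FG := IsNoetherian.noetherian _
  obtain ⟨s, hs⟩ := hT
  set g : M → R := fun x =>
    if hx : ∃ a : R, a ≠ 0 ∧ a • x = 0 then hx.choose else 1 with hg
  have hg_ne : ∀ x, g x ≠ 0 := by
    intro x
    by_cases hx : ∃ a : R, a ≠ 0 ∧ a • x = 0
    · simp only [hg, dif_pos hx]; exact hx.choose_spec.1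
    · simp only [hg, dif_neg hx]; exact one_ne_zero
  have hg_smul : ∀ x, (∃ a : R, a ≠ 0 ∧ a • x = 0) → g x • x = 0 := by
    intro x hx
    simp only [hg, dif_pos hx]
    exact hx.choose_spec.2
  refine ⟨∏ x ∈ s, g x, Finset.prod_ne_zero_iff.mpr fun x _ => hg_ne x, ?_⟩
  intro m hm
  have hmT : m ∈ Submodule.torsion R M := by
    obtain ⟨a, ha, haz⟩ := hm
    exact ⟨⟨a, mem_nonZeroDivisors_of_ne_zero ha⟩, haz⟩
  rw [← hs] at hmT
  clear hm
  induction hmT using Submodule.span_induction with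
  | mem x hx =>
      have hxT : x ∈ Submodule.torsion R M := by
        rw [← hs]; exact Submodule.subset_span hx
      obtain ⟨⟨a, haR⟩, haz⟩ := hxT
      have hgx : g x • x = 0 :=
        hg_smul x ⟨a, nonZeroDivisors.ne_zero haR, haz⟩
      have hxs : x ∈ s := hx
      obtain ⟨c, hc⟩ := Finset.dvd_prod_of_mem g hxs
      rw [hc, mul_comm, mul_smul, hgx, smul_zero]
  | zero => simp
  | add x y _ _ hx hy => rw [smul_add, hx, hy, add_zero]
  | smul a x _ hx => rw [smul_comm, hx, smul_zero]

set_option maxHeartbeats 1600000 in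
set_option synthInstance.maxHeartbeats 400000 in
/-- Let `R` be a PID and `0 = U₀ ⊆ U₁ ⊆ ⋯ ⊆ U_ℓ = U` a filtration of a
finitely generated `R`-module `U`.  Then there is a nonzero `h ∈ R` such that the
localization `R_h ⊗_R U` is free, each localized filtration term is free, and each
inclusion of consecutive localized terms is split (each term is a direct summand of
the next). -/
theorem filtration_localization_additive {R : Type*} [CommRing R] [IsDomain R]
    [IsPrincipalIdealRing R] (U : Type*) [AddCommGroup U] [Module R U]
    [Module.Finite R U] (ℓ : ℕ) (F : Fin (ℓ + 1) → Submodule R U)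
    (hmono : Monotone F) (h0 : F 0 = ⊥) (hlast : F (Fin.last ℓ) = ⊤) :
    ∃ h : R, h ≠ 0 ∧
      Module.Free (Localization.Away h) (LocalizedModule (Submonoid.powers h) U) ∧
      (let L : Fin (ℓ + 1) → Submodule (Localization.Away h)
          (LocalizedModule (Submonoid.powers h) U) :=
        fun j => Submodule.span (Localization.Away h)
          ((LocalizedModule.mkLinearMap (Submonoid.powers h) U) '' (F j : Set U))
      (∀ j, Module.Free (Localization.Away h) (L j)) ∧
      ∀ i : Fin ℓ, ∃ C : Submodule (Localization.Away h)
          (LocalizedModule (Submonoid.powers h) U),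
        L i.castSucc ⊓ C = ⊥ ∧ L i.castSucc ⊔ C = L i.succ) := by
  classical
  -- choose annihilators of the torsion of each quotient
  have key : ∀ j : Fin (ℓ + 1), ∃ r : R, r ≠ 0 ∧
      ∀ m : U ⧸ F j, (∃ a : R, a ≠ 0 ∧ a • m = 0) → r • m = 0 := fun j =>
    aux_exists_annihilator (U ⧸ F j)
  choose r hr0 hrann using key
  set h : R := ∏ j, r j with hh
  have hne : h ≠ 0 := Finset.prod_ne_zero_iff.mpr fun j _ => hr0 j
  refine ⟨h, hne, ?_⟩
  set P : Submonoid R := Submonoid.powers h with hP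
  set A : Type _ := Localization.Away h with hA
  set f : U →ₗ[R] LocalizedModule P U := LocalizedModule.mkLinearMap P U with hf
  set M : Type _ := LocalizedModule P U with hM
  -- Instances on the localization
  haveI hPle : P ≤ nonZeroDivisors R := powers_le_nonZeroDivisors_of_noZeroDivisors hne
  haveI : IsDomain A := IsLocalization.isDomain_localization hPle
  haveI : IsPrincipalIdealRing A := aux_isPrincipalIdealRing_localization P A
  haveI : Module.Finite A M := Module.Finite.of_isLocalizedModule P f
  haveI : IsNoetherian A M := isNoetherian_of_isNoetherianRing_of_finite A M
  -- identification of the spans with localized submodules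
  have hL : ∀ j : Fin (ℓ + 1),
      Submodule.span A (f '' (F j : Set U)) = (F j).localized' A P f := fun j => by
    conv_rhs => rw [← Submodule.span_eq (F j)]
    rw [Submodule.localized'_span]
  -- the crux: localized quotients are torsion-free
  have crux : ∀ (j : Fin (ℓ + 1)) (c : A) (x : M), c ≠ 0 →
      c • x ∈ (F j).localized' A P f → x ∈ (F j).localized' A P f := by
    intro j c x hc hcx
    -- write c as a fraction
    obtain ⟨⟨a, s⟩, rfl⟩ := IsLocalization.mk'_surjective P c
    have ha : a ≠ 0 := by
      rintro rfl
      exact hc (IsLocalization.mk'_zero s)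
    -- clear the denominator
    have hax : (algebraMap R A a) • x ∈ (F j).localized' A P f := by
      have : (algebraMap R A a) • x = (algebraMap R A s) • (IsLocalization.mk' A a s • x) := by
        rw [← mul_smul, IsLocalization.mk'_spec']
      rw [this]
      exact Submodule.smul_mem _ _ hcx
    obtain ⟨⟨m, t⟩, rfl⟩ := IsLocalizedModule.mk'_surjective P f x
    have hax' : IsLocalizedModule.mk' f (a • m) t ∈ (F j).localized' A P f := by
      rwa [IsLocalizedModule.mk'_smul, ← algebraMap_smul A a]
    obtain ⟨n, hn, u, hu⟩ := (Submodule.mem_localized' A P f (F j) _).mp hax'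
    obtain ⟨v, hv⟩ := (IsLocalizedModule.mk'_eq_mk'_iff f n (a • m) u t).mp hu
    -- hv : v • u • (a • m) = v • t • n
    have hmem : a • ((v * u : P) : R) • m ∈ F j := by
      have h1 : ((v * u : P) : R) • (a • m) = (↑v : R) • (↑t : R) • n := by
        rw [Submonoid.coe_mul, mul_smul]
        simpa [Submonoid.smul_def] using hv
      rw [smul_comm] at h1
      rw [h1]
      exact Submodule.smul_mem _ _ (Submodule.smul_mem _ _ hn)
    -- torsion in the quotient
    set w : R := ((v * u : P) : R) with hw
    have hq : r j • Submodule.Quotient.mk (p := F j) (w • m) = 0 := by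
      apply hrann j
      refine ⟨a, ha, ?_⟩
      rw [← Submodule.Quotient.mk_smul, Submodule.Quotient.mk_eq_zero]
      exact hmem
    have hrj : r j • (w • m) ∈ F j := by
      rwa [← Submodule.Quotient.mk_smul, Submodule.Quotient.mk_eq_zero] at hq
    have hdvd : h • (w • m) ∈ F j := by
      have : (∏ k ∈ Finset.univ.erase j, r k) * r j = h := by
        rw [mul_comm, hh, Finset.mul_prod_erase _ _ (Finset.mem_univ j)]
      rw [← this, mul_smul]
      exact Submodule.smul_mem _ _ hrj
    -- conclude membership
    refine (Submodule.mem_localized' A P f (F j) _).mpr ?_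
    refine ⟨(⟨h, 1, pow_one h⟩ * (v * u) : P) • m, ?_, (⟨h, 1, pow_one h⟩ * (v * u) : P) * t, ?_⟩
    · rw [hw, Submonoid.coe_mul, mul_smul] at hdvd
      simpa [Submonoid.smul_def, Submonoid.coe_mul, mul_smul] using hdvd
    · exact IsLocalizedModule.mk'_cancel_left (f := f) m _ t
  -- torsion-freeness of M itself
  have hL0 : (F (0 : Fin (ℓ + 1))).localized' A P f = ⊥ := by
    rw [h0, Submodule.localized'_bot]
  haveI : NoZeroSMulDivisors A M := by
    constructor
    intro c x hcx
    by_cases hc : c = 0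
    · exact Or.inl hc
    · refine Or.inr ?_
      have : c • x ∈ (F (0 : Fin (ℓ + 1))).localized' A P f := by
        rw [hL0, hcx]; exact Submodule.mem_bot A |>.mpr rfl
      have := crux 0 c x hc this
      rwa [hL0, Submodule.mem_bot] at this
  haveI : Module.Free A M := Module.free_of_finite_type_torsion_free'
  refine ⟨inferInstance, ?_, ?_⟩
  · -- each L j is free
    intro j
    simp only [hL]
    haveI : Module.Finite A ((F j).localized' A P f) :=
      Module.Finite.iff_fg.mpr (IsNoetherian.noetherian _)
    exact Module.free_of_finite_type_torsion_free'
  · -- the splittings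
    intro i
    have hle : (F i.castSucc).localized' A P f ≤ (F i.succ).localized' A P f := by
      rintro x ⟨m, hm, s, rfl⟩
      exact ⟨m, hmono (le_of_lt i.castSucc_lt_succ) hm, s, rfl⟩
    set Lcs := (F i.castSucc).localized' A P f with hLcs
    set Ls := (F i.succ).localized' A P f with hLs
    set V : Submodule A M := Ls with hV
    set p : Submodule A V := Lcs.comap V.subtype with hp
    -- the quotient V ⧸ p is torsion-free
    haveI : NoZeroSMulDivisors A (M ⧸ Lcs) := by
      constructor
      intro c x hcx
      by_cases hc : c = 0
      · exact Or.inl hc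
      · refine Or.inr ?_
        obtain ⟨y, rfl⟩ := Submodule.Quotient.mk_surjective Lcs x
        rw [← Submodule.Quotient.mk_smul, Submodule.Quotient.mk_eq_zero] at hcx
        rw [Submodule.Quotient.mk_eq_zero]
        exact crux i.castSucc c y hc hcx
    have hker : LinearMap.ker (Lcs.mkQ ∘ₗ V.subtype) = p := by
      ext x
      simp [hp, Submodule.mem_comap, LinearMap.mem_ker, Submodule.Quotient.mk_eq_zero]
    haveI : NoZeroSMulDivisors A (V ⧸ p) := by
      refine aux_noZeroSMulDivisors_of_injective
        (p.liftQ (Lcs.mkQ ∘ₗ V.subtype) (le_of_eq hker.symm)) ?_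
      rw [← LinearMap.ker_eq_bot]
      exact Submodule.ker_liftQ_eq_bot' _ _ hker.symm
    haveI : Module.Finite A V := Module.Finite.iff_fg.mpr (IsNoetherian.noetherian _)
    haveI : Module.Finite A (V ⧸ p) :=
      Module.Finite.of_surjective p.mkQ (Submodule.mkQ_surjective p)
    haveI : Module.Free A (V ⧸ p) := Module.free_of_finite_type_torsion_free'
    obtain ⟨g, hg⟩ := Module.projective_lifting_property p.mkQ LinearMap.id
      (Submodule.mkQ_surjective p)
    -- g : V ⧸ p →ₗ V with mkQ ∘ g = id
    refine ⟨(LinearMap.range g).map V.subtype, ?_, ?_⟩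
    · -- trivial intersection
      simp only [hL, ← hLcs]
      rw [show Submodule.span (Localization.Away h) (⇑f '' ↑(F i.castSucc)) = Lcs from hL _]
      apply le_bot_iff.mp
      rintro x ⟨hx1, hx2⟩
      obtain ⟨y, ⟨q, rfl⟩, rfl⟩ := hx2
      have hq0 : q = 0 := by
        have hgq : g q ∈ p := hx1
        have hq : p.mkQ (g q) = q := LinearMap.congr_fun hg q
        rw [← hq, Submodule.mkQ_apply, Submodule.Quotient.mk_eq_zero]
        exact hgq
      simp [hq0]
    · -- the sup
      simp only [hL, ← hLcs, ← hLs]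
      rw [show Submodule.span (Localization.Away h) (⇑f '' ↑(F i.castSucc)) = Lcs from hL _,
        show Submodule.span (Localization.Away h) (⇑f '' ↑(F i.succ)) = Ls from hL _]
      apply le_antisymm
      · refine sup_le hle ?_
        rintro x ⟨y, _, rfl⟩
        exact y.2
      · intro x hx
        set v : V := ⟨x, hx⟩ with hv
        have hdecomp : v = (v - g (p.mkQ v)) + g (p.mkQ v) := by abel
        have h1 : v - g (p.mkQ v) ∈ p := by
          have hq : p.mkQ (g (p.mkQ v)) = p.mkQ v := LinearMap.congr_fun hg (p.mkQ v)
          rw [← Submodule.Quotient.mk_eq_zero p, ← Submodule.mkQ_apply, map_sub, hq, sub_self]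
        have hx1 : ((v - g (p.mkQ v) : V) : M) ∈ Lcs := h1
        have hx2 : ((g (p.mkQ v) : V) : M) ∈ (LinearMap.range g).map V.subtype :=
          ⟨g (p.mkQ v), ⟨p.mkQ v, rfl⟩, rfl⟩
        have : x = ((v - g (p.mkQ v) : V) : M) + ((g (p.mkQ v) : V) : M) := by
          rw [← Submodule.coe_add, ← hdecomp]
        rw [this]
        exact Submodule.add_mem_sup hx1 hx2
end

section
/- Let ({\cal A}, I) be a triangular interlaced weak ditalgebra with a source idempotent e₀ (a centrally primitive idempotent of the minimal algebra R with e₀W = 0, Re₀ = ke₀, e₀ ∉ I), and set f = 1 − e₀. Then the subalgebra T^⊖ := T_R(fWf) of T = T_R(W) is invariant under the differential δ, and T^⊖ = ke₀ × fTf as k-algebras; moreover fW^n f = (fWf)^n for all n ≥ 1. -/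
/- Model: the triangular interlaced weak ditalgebra `(𝒜, I)` with layer `(R, W)`
is realized inside the internally graded ambient algebra `T = T_R(W)`:
`R` is a subalgebra, `W = W₀ ⊕ W₁` with `W₀` of degree 0 and `W₁` of degree 1,
`δ` the differential (with `δ(R) = 0`), and `e₀` a source idempotent. -/

theorem source_detachment_aux {k T : Type*} [Field k] [Ring T] [Algebra k T]
    (𝒜 : ℕ → Submodule k T) (hone : (1 : T) ∈ 𝒜 0)
    (hmul : ∀ i j : ℕ, 𝒜 i * 𝒜 j ≤ 𝒜 (i + j))
    (hInternal : DirectSum.IsInternal 𝒜)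
    (R : Subalgebra k T) (W : Submodule k T)
    (hR0 : R.toSubmodule ≤ 𝒜 0)
    (hgen : Algebra.adjoin k ((R : Set T) ∪ (W : Set T)) = ⊤)
    (δ : T →ₗ[k] T)
    (hLeib : ∀ i j : ℕ, ∀ a ∈ 𝒜 i, ∀ b ∈ 𝒜 j,
      δ (a * b) = δ a * b + ((-1 : k) ^ i) • (a * δ b))
    (hδR : ∀ r ∈ R, δ r = 0)
    (e₀ : T) (he₀R : e₀ ∈ R) (hidem : e₀ * e₀ = e₀)
    (hcentral : ∀ r ∈ R, e₀ * r = r * e₀)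
    (he₀W : ∀ w ∈ W, e₀ * w = 0)
    (hRe₀ : ∀ r ∈ R, ∃ c : k, r * e₀ = c • e₀) :
    (∀ x ∈ Algebra.adjoin k ((R : Set T) ∪
        ((fun w => (1 - e₀) * w * (1 - e₀)) '' (W : Set T))),
      δ x ∈ Algebra.adjoin k ((R : Set T) ∪
        ((fun w => (1 - e₀) * w * (1 - e₀)) '' (W : Set T)))) ∧
    (∀ x ∈ Algebra.adjoin k ((R : Set T) ∪
        ((fun w => (1 - e₀) * w * (1 - e₀)) '' (W : Set T))),
      ∃ c : k, x = c • e₀ + (1 - e₀) * x * (1 - e₀)) ∧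
    (∀ (c : k) (t : T), c • e₀ + (1 - e₀) * t * (1 - e₀) ∈
      Algebra.adjoin k ((R : Set T) ∪
        ((fun w => (1 - e₀) * w * (1 - e₀)) '' (W : Set T)))) ∧
    (∀ n : ℕ, 1 ≤ n →
      Submodule.map ((LinearMap.mulLeft k (1 - e₀)).comp (LinearMap.mulRight k (1 - e₀))) (W ^ n)
        = (Submodule.map ((LinearMap.mulLeft k (1 - e₀)).comp
            (LinearMap.mulRight k (1 - e₀))) W) ^ n) := by
  set f : T := 1 - e₀ with hf
  set corner : T →ₗ[k] T := (LinearMap.mulLeft k f).comp (LinearMap.mulRight k f) with hcornerdef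
  set Tm : Subalgebra k T :=
    Algebra.adjoin k ((R : Set T) ∪ ((fun w => f * w * f) '' (W : Set T))) with hTmdef
  have hcor : ∀ x : T, corner x = f * x * f := fun x => (mul_assoc f x f).symm
  have hfR : f ∈ R := sub_mem R.one_mem he₀R
  have hff : f * f = f := by
    rw [hf, sub_mul, one_mul, mul_sub, mul_one, hidem, sub_self, sub_zero]
  have hef : e₀ * f = 0 := by rw [hf, mul_sub, mul_one, hidem, sub_self]
  have hfe : f * e₀ = 0 := by rw [hf, sub_mul, one_mul, hidem, sub_self]
  have hfr : ∀ r ∈ R, f * r = r * f := fun r hr => by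
    rw [hf, sub_mul, mul_sub, one_mul, mul_one, hcentral r hr]
  have hf0 : f ∈ 𝒜 0 := hR0 hfR
  have hδf : δ f = 0 := hδR f hfR
  -- Claim K: e₀ * t ∈ k e₀ for all t
  have hK : ∀ t : T, ∃ c : k, e₀ * t = c • e₀ := by
    intro t
    have ht : t ∈ Algebra.adjoin k ((R : Set T) ∪ (W : Set T)) := by rw [hgen]; trivial
    induction ht using Algebra.adjoin_induction with
    | mem x hx =>
      rcases hx with hx | hx
      · obtain ⟨c, hc⟩ := hRe₀ x hx
        exact ⟨c, by rw [hcentral x hx, hc]⟩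
      · exact ⟨0, by rw [he₀W x hx, zero_smul]⟩
    | algebraMap r =>
      exact ⟨r, by rw [Algebra.algebraMap_eq_smul_one, mul_smul_comm, mul_one]⟩
    | add x y hx hy ihx ihy =>
      obtain ⟨c, hc⟩ := ihx; obtain ⟨d, hd⟩ := ihy
      exact ⟨c + d, by rw [mul_add, hc, hd, add_smul]⟩
    | mul x y hx hy ihx ihy =>
      obtain ⟨c, hc⟩ := ihx; obtain ⟨d, hd⟩ := ihy
      exact ⟨c * d, by rw [← mul_assoc, hc, smul_mul_assoc, hd, smul_smul]⟩
  -- corner is multiplicative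
  have hCM : ∀ a b : T, f * (a * b) * f = (f * a * f) * (f * b * f) := by
    intro a b
    obtain ⟨c, hc⟩ := hK b
    have h1 : e₀ * (b * f) = 0 := by rw [← mul_assoc, hc, smul_mul_assoc, hef, smul_zero]
    have h2 : f * (b * f) = b * f := by rw [hf, sub_mul, one_mul, h1, sub_zero]
    simp only [mul_assoc]
    rw [h2, h2]
  have hRTm : ∀ r ∈ R, r ∈ Tm := fun r hr => Algebra.subset_adjoin (Or.inl hr)
  have heTm : e₀ ∈ Tm := hRTm e₀ he₀R
  have hWTm : ∀ w ∈ W, f * w * f ∈ Tm := fun w hw =>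
    Algebra.subset_adjoin (Or.inr ⟨w, hw, rfl⟩)
  have hfrf : ∀ r ∈ R, f * r * f = r - r * e₀ := fun r hr => by
    rw [hfr r hr, mul_assoc, hff, hf, mul_sub, mul_one]
  -- fTf ⊆ Tm
  have hfTf : ∀ t : T, f * t * f ∈ Tm := by
    intro t
    have ht : t ∈ Algebra.adjoin k ((R : Set T) ∪ (W : Set T)) := by rw [hgen]; trivial
    induction ht using Algebra.adjoin_induction with
    | mem x hx =>
      rcases hx with hx | hx
      · obtain ⟨c, hc⟩ := hRe₀ x hx
        rw [hfrf x hx, hc]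
        exact sub_mem (hRTm x hx) (Subalgebra.smul_mem _ heTm c)
      · exact hWTm x hx
    | algebraMap r =>
      have hr : (algebraMap k T r) ∈ R := Subalgebra.algebraMap_mem R r
      obtain ⟨c, hc⟩ := hRe₀ _ hr
      rw [hfrf _ hr, hc]
      exact sub_mem (hRTm _ hr) (Subalgebra.smul_mem _ heTm c)
    | add x y hx hy ihx ihy =>
      have : f * (x + y) * f = f * x * f + f * y * f := by rw [mul_add, add_mul]
      rw [this]; exact add_mem ihx ihy
    | mul x y hx hy ihx ihy =>
      rw [hCM x y]; exact mul_mem ihx ihy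
  -- part 2a
  have part2a : ∀ x ∈ Tm, ∃ c : k, x = c • e₀ + f * x * f := by
    intro x hx
    induction hx using Algebra.adjoin_induction with
    | mem y hy =>
      rcases hy with hy | hy
      · obtain ⟨c, hc⟩ := hRe₀ y hy
        refine ⟨c, ?_⟩
        rw [hfrf y hy, hc]
        abel
      · obtain ⟨w, hw, rfl⟩ := hy
        refine ⟨0, ?_⟩
        have h3 : f * (f * w * f) * f = f * w * f := by
          simp only [← mul_assoc]
          rw [hff, mul_assoc, hff]
        rw [h3, zero_smul, zero_add]
    | algebraMap r =>
      have hr : (algebraMap k T r) ∈ R := Subalgebra.algebraMap_mem R r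
      obtain ⟨c, hc⟩ := hRe₀ _ hr
      refine ⟨c, ?_⟩
      rw [hfrf _ hr, hc]
      abel
    | add x y hx hy ihx ihy =>
      obtain ⟨c, hc⟩ := ihx; obtain ⟨d, hd⟩ := ihy
      refine ⟨c + d, ?_⟩
      rw [mul_add, add_mul, add_smul]
      calc x + y = (c • e₀ + f * x * f) + (d • e₀ + f * y * f) := by rw [← hc, ← hd]
        _ = c • e₀ + d • e₀ + (f * x * f + f * y * f) := by abel
    | mul x y hx hy ihx ihy =>
      obtain ⟨c, hc⟩ := ihx; obtain ⟨d, hd⟩ := ihy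
      refine ⟨c * d, ?_⟩
      have h1 : (f * x * f) * e₀ = 0 := by rw [mul_assoc, hfe, mul_zero]
      have h2 : e₀ * (f * y * f) = 0 := by
        rw [← mul_assoc, ← mul_assoc, hef, zero_mul, zero_mul]
      rw [hCM]
      conv_lhs => rw [hc, hd]
      simp only [add_mul, mul_add, smul_mul_assoc, mul_smul_comm, h1, h2, hidem,
        smul_zero, add_zero, zero_add, smul_smul]
      rw [mul_comm d c]
  -- construct the sign map σ
  obtain ⟨σ, hσ⟩ : ∃ σ : T →ₗ[k] T, ∀ n : ℕ, ∀ x ∈ 𝒜 n, σ x = ((-1 : k) ^ n) • x := by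
    refine ⟨(DirectSum.toModule k ℕ T (fun i => ((-1 : k) ^ i) • (𝒜 i).subtype)) ∘ₗ
      (LinearEquiv.ofBijective (DirectSum.coeLinearMap 𝒜) hInternal).symm.toLinearMap,
      fun n x hx => ?_⟩
    have h1 : (LinearEquiv.ofBijective (DirectSum.coeLinearMap 𝒜) hInternal).symm x
        = DirectSum.lof k ℕ (fun i => 𝒜 i) n ⟨x, hx⟩ := by
      rw [LinearEquiv.symm_apply_eq]
      change x = DirectSum.coeLinearMap 𝒜 _
      rw [DirectSum.lof_eq_of, DirectSum.coeLinearMap_of]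
    simp only [LinearMap.coe_comp, Function.comp_apply, LinearEquiv.coe_coe, h1,
      DirectSum.toModule_lof, LinearMap.smul_apply, Submodule.coe_subtype]
  have htop : ∀ x : T, x ∈ ⨆ i, 𝒜 i := fun x => by
    rw [hInternal.submodule_iSup_eq_top]; trivial
  -- σ is multiplicative
  have hσm : ∀ a b : T, σ (a * b) = σ a * σ b := by
    intro a b
    refine Submodule.iSup_induction 𝒜 (motive := fun a => ∀ y : T, σ (a * y) = σ a * σ y)
      (htop a) ?_ ?_ ?_ b
    · intro i a ha
      intro y
      refine Submodule.iSup_induction 𝒜 (motive := fun y => σ (a * y) = σ a * σ y)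
        (htop y) ?_ ?_ ?_
      · intro j y hy
        rw [hσ (i + j) _ (hmul i j (Submodule.mul_mem_mul ha hy)), hσ i a ha, hσ j y hy,
          smul_mul_assoc, mul_smul_comm, smul_smul, ← pow_add]
      · simp
      · intro u v hu hv
        rw [mul_add, map_add, map_add, mul_add, hu, hv]
    · intro y
      rw [zero_mul, map_zero, zero_mul]
    · intro u v hu hv y
      rw [add_mul, map_add, map_add, add_mul, hu, hv]
  -- general Leibniz rule
  have hL : ∀ a b : T, δ (a * b) = δ a * b + σ a * δ b := by
    intro a b
    refine Submodule.iSup_induction 𝒜 (motive := fun a => ∀ y : T, δ (a * y) = δ a * y + σ a * δ y)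
      (htop a) ?_ ?_ ?_ b
    · intro i a ha
      intro y
      refine Submodule.iSup_induction 𝒜 (motive := fun y => δ (a * y) = δ a * y + σ a * δ y)
        (htop y) ?_ ?_ ?_
      · intro j y hy
        rw [hLeib i j a ha y hy, hσ i a ha, smul_mul_assoc]
      · simp
      · intro u v hu hv
        rw [mul_add, map_add, map_add, mul_add, mul_add, hu, hv]
        abel
    · intro y
      simp
    · intro u v hu hv y
      rw [add_mul, map_add, map_add, map_add, add_mul, add_mul, hu, hv]
      abel
  have hσf : σ f = f := by rw [hσ 0 f hf0, pow_zero, one_smul]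
  have hσe : σ e₀ = e₀ := by rw [hσ 0 e₀ (hR0 he₀R), pow_zero, one_smul]
  have hσTm : ∀ x ∈ Tm, σ x ∈ Tm := by
    intro x hx
    obtain ⟨c, hc⟩ := part2a x hx
    have h1 : σ (f * x * f) = f * σ x * f := by
      rw [hσm (f * x) f, hσm f x, hσf]
    rw [hc, map_add, map_smul, hσe, h1]
    exact add_mem (Subalgebra.smul_mem _ heTm c) (hfTf (σ x))
  -- part 1
  have part1 : ∀ x ∈ Tm, δ x ∈ Tm := by
    intro x hx
    induction hx using Algebra.adjoin_induction with
    | mem y hy =>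
      rcases hy with hy | hy
      · rw [hδR y hy]; exact Subalgebra.zero_mem _
      · obtain ⟨w, hw, rfl⟩ := hy
        have h4 : δ (f * w * f) = f * δ w * f := by
          rw [hL (f * w) f, hL f w, hδf, hσf]
          simp
        rw [h4]; exact hfTf (δ w)
    | algebraMap r =>
      rw [hδR _ (Subalgebra.algebraMap_mem R r)]
      exact Subalgebra.zero_mem _
    | add x y hx hy ihx ihy =>
      rw [map_add]; exact add_mem ihx ihy
    | mul x y hx hy ihx ihy =>
      rw [hL x y]
      exact add_mem (mul_mem ihx hy) (mul_mem (hσTm x hx) ihy)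
  -- part 2b
  have part2b : ∀ (c : k) (t : T), c • e₀ + f * t * f ∈ Tm := fun c t =>
    add_mem (Subalgebra.smul_mem _ heTm c) (hfTf t)
  -- part 3
  have hmapmul : ∀ M N : Submodule k T,
      Submodule.map corner (M * N) = Submodule.map corner M * Submodule.map corner N := by
    intro M N
    apply le_antisymm
    · rw [Submodule.map_le_iff_le_comap]
      refine Submodule.mul_le.2 fun a ha b hb => ?_
      simp only [Submodule.mem_comap, hcor, hCM a b]
      exact Submodule.mul_mem_mul ⟨a, ha, (hcor a).symm ▸ rfl⟩ ⟨b, hb, (hcor b).symm ▸ rfl⟩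
    · refine Submodule.mul_le.2 fun x hx y hy => ?_
      obtain ⟨a, ha, rfl⟩ := hx
      obtain ⟨b, hb, rfl⟩ := hy
      refine ⟨a * b, Submodule.mul_mem_mul ha hb, ?_⟩
      rw [hcor, hcor, hcor, hCM]
  have part3 : ∀ n : ℕ, 1 ≤ n →
      Submodule.map corner (W ^ n) = (Submodule.map corner W) ^ n := by
    intro n hn
    induction n, hn using Nat.le_induction with
    | base => rw [pow_one, pow_one]
    | succ n hn ih =>
      rw [pow_succ, pow_succ, hmapmul, ih]
  exact ⟨part1, part2a, part2b, part3⟩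

/-- Let `(𝒜, I)` be a triangular interlaced weak ditalgebra with a
source idempotent `e₀` (`e₀W = 0`, `Re₀ = ke₀`, `e₀ ∉ I`) and `f = 1 - e₀`.  Then
the subalgebra `T^⊖ = T_R(fWf)` of `T = T_R(W)` is invariant under `δ`,
`T^⊖ = ke₀ × fTf` as `k`-algebras, and `fW^nf = (fWf)^n` for all `n ≥ 1`. -/
theorem source_detachment {k T : Type*} [Field k] [Ring T] [Algebra k T]
    (𝒜 : ℕ → Submodule k T) (hone : (1 : T) ∈ 𝒜 0)
    (hmul : ∀ i j : ℕ, 𝒜 i * 𝒜 j ≤ 𝒜 (i + j))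
    (hInternal : DirectSum.IsInternal 𝒜)
    (R : Subalgebra k T) (W W₀ W₁ : Submodule k T)
    (hW : W = W₀ ⊔ W₁) (hW0 : W₀ ≤ 𝒜 0) (hW1 : W₁ ≤ 𝒜 1)
    (hR0 : R.toSubmodule ≤ 𝒜 0)
    (hgen : Algebra.adjoin k ((R : Set T) ∪ (W : Set T)) = ⊤)
    (δ : T →ₗ[k] T)
    (hdeg : ∀ i : ℕ, ∀ x ∈ 𝒜 i, δ x ∈ 𝒜 (i + 1))
    (hLeib : ∀ i j : ℕ, ∀ a ∈ 𝒜 i, ∀ b ∈ 𝒜 j,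
      δ (a * b) = δ a * b + ((-1 : k) ^ i) • (a * δ b))
    (hδR : ∀ r ∈ R, δ r = 0)
    (I : Submodule k T) (hIA : I ≤ 𝒜 0)
    -- e₀ is a source idempotent:
    (e₀ : T) (he₀R : e₀ ∈ R) (hidem : e₀ * e₀ = e₀)
    (hcentral : ∀ r ∈ R, e₀ * r = r * e₀)
    (he₀W : ∀ w ∈ W, e₀ * w = 0)
    (hRe₀ : ∀ r ∈ R, ∃ c : k, r * e₀ = c • e₀)
    (he₀I : e₀ ∉ I) :
    (let f : T := 1 - e₀
     let corner : T →ₗ[k] T :=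
       (LinearMap.mulLeft k f).comp (LinearMap.mulRight k f)
     let Tminus : Subalgebra k T :=
       Algebra.adjoin k ((R : Set T) ∪ ((fun w => f * w * f) '' (W : Set T)))
     -- (1) T^⊖ is invariant under the differential δ
     (∀ x ∈ Tminus, δ x ∈ Tminus) ∧
     -- (2) T^⊖ = k e₀ × f T f
     (∀ x ∈ Tminus, ∃ c : k, x = c • e₀ + f * x * f) ∧
     (∀ (c : k) (t : T), c • e₀ + f * t * f ∈ Tminus) ∧
     -- (3) f W^n f = (f W f)^n for all n ≥ 1
     (∀ n : ℕ, 1 ≤ n →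
       Submodule.map corner (W ^ n) = (Submodule.map corner W) ^ n)) := by
  exact source_detachment_aux 𝒜 hone hmul hInternal R W hR0 hgen δ hLeib hδR e₀ he₀R hidem
    hcentral he₀W hRe₀
end
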